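/- The gradient of F : M_{n-1}(ℝ)∖{S(A)=0} → ℝ vanishes at A if and only if either S(A) = cI with c ≠ 0, or [A,Aᵀ] = 0 and tr A = 0. -/

import Mathlib

open Matrix

/-- Symmetric part `S(A) = (A + Aᵀ)/2`. -/
noncomputable def Ssym {m : ℕ} (A : Matrix (Fin m) (Fin m) ℝ) : Matrix (Fin m) (Fin m) ℝ :=
  (1 / 2 : ℝ) • (A + Aᵀ)

/-- Commutator of matrices. -/
def brk {m : ℕ} (X Y : Matrix (Fin m) (Fin m) ℝ) : Matrix (Fin m) (Fin m) ℝ :=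
  X * Y - Y * X

/-- Squared norm `|X|² = tr (X Xᵀ)`. -/
noncomputable def nsq {m : ℕ} (X : Matrix (Fin m) (Fin m) ℝ) : ℝ :=
  (X * Xᵀ).trace

/-- The Ricci pinching functional of the almost-abelian solvmanifold attached to `A`:
`F(A) = (tr S(A)² + (tr A)²)² / (tr S(A)² (tr S(A)² + (tr A)²) + ¼|[A,Aᵀ]|²)`. -/
noncomputable def Fpinch {m : ℕ} (A : Matrix (Fin m) (Fin m) ℝ) : ℝ :=
  ((Ssym A * Ssym A).trace + A.trace ^ 2) ^ 2 /
    ((Ssym A * Ssym A).trace * ((Ssym A * Ssym A).trace + A.trace ^ 2)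
      + (1 / 4) * nsq (brk A Aᵀ))

attribute [local instance] Matrix.normedAddCommGroup Matrix.normedSpace

namespace Stmt11

variable {m : ℕ}

/-! ### Scalar abbreviations -/

noncomputable def tS (A : Matrix (Fin m) (Fin m) ℝ) : ℝ := (Ssym A * Ssym A).trace
noncomputable def n1 (A : Matrix (Fin m) (Fin m) ℝ) : ℝ := tS A + A.trace ^ 2
noncomputable def Dd (A : Matrix (Fin m) (Fin m) ℝ) : ℝ :=
  tS A * n1 A + (1/4) * nsq (brk A Aᵀ)
noncomputable def Emat (A : Matrix (Fin m) (Fin m) ℝ) : Matrix (Fin m) (Fin m) ℝ :=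
  Aᵀ * brk A Aᵀ - brk A Aᵀ * Aᵀ
noncomputable def Hmat (A : Matrix (Fin m) (Fin m) ℝ) : Matrix (Fin m) (Fin m) ℝ :=
  (nsq (brk A Aᵀ) - 2 * A.trace ^ 2 * n1 A) • Ssym A
    + (A.trace * (2 * tS A * n1 A + nsq (brk A Aᵀ))) • (1 : Matrix (Fin m) (Fin m) ℝ)
    - n1 A • Emat A

/-! ### nsq and trace lemmas -/

lemma nsq_eq_sum (X : Matrix (Fin m) (Fin m) ℝ) : nsq X = ∑ i, ∑ j, (X i j) ^ 2 := by
  simp [nsq, Matrix.trace, Matrix.mul_apply, Matrix.diag, sq]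

lemma nsq_nonneg (X : Matrix (Fin m) (Fin m) ℝ) : 0 ≤ nsq X := by
  rw [nsq_eq_sum]; positivity

lemma nsq_eq_zero {X : Matrix (Fin m) (Fin m) ℝ} : nsq X = 0 ↔ X = 0 := by
  rw [nsq_eq_sum]
  constructor
  · intro h
    ext i j
    have h1 : ∀ i ∈ Finset.univ, (0:ℝ) ≤ ∑ j, (X i j)^2 := by intro i _; positivity
    have h2 := (Finset.sum_eq_zero_iff_of_nonneg h1).mp h i (Finset.mem_univ i)
    have h3 : ∀ j ∈ Finset.univ, (0:ℝ) ≤ (X i j)^2 := by intro j _; positivity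
    have h4 := (Finset.sum_eq_zero_iff_of_nonneg h3).mp h2 j (Finset.mem_univ j)
    simpa using pow_eq_zero_iff (n := 2) (by norm_num) |>.mp h4
  · intro h; simp [h]

lemma Ssym_transpose (A : Matrix (Fin m) (Fin m) ℝ) : (Ssym A)ᵀ = Ssym A := by
  simp [Ssym, transpose_add, add_comm]

lemma brk_transpose (A : Matrix (Fin m) (Fin m) ℝ) : (brk A Aᵀ)ᵀ = brk A Aᵀ := by
  simp [brk, transpose_sub, transpose_mul]

lemma tS_eq_nsq (A : Matrix (Fin m) (Fin m) ℝ) : tS A = nsq (Ssym A) := by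
  rw [tS, nsq, Ssym_transpose]

lemma tr_mul_trans (X B : Matrix (Fin m) (Fin m) ℝ) :
    (X * Bᵀ).trace = (Xᵀ * B).trace := by
  rw [← trace_transpose (X * Bᵀ), transpose_mul, transpose_transpose, trace_mul_comm]

lemma tS_pos {A : Matrix (Fin m) (Fin m) ℝ} (hS : Ssym A ≠ 0) : 0 < tS A := by
  rw [tS_eq_nsq]
  rcases lt_or_eq_of_le (nsq_nonneg (Ssym A)) with h | h
  · exact h
  · exact absurd (nsq_eq_zero.mp h.symm) hS

lemma n1_pos {A : Matrix (Fin m) (Fin m) ℝ} (hS : Ssym A ≠ 0) : 0 < n1 A := by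
  have := tS_pos hS; rw [n1]; positivity

lemma Dd_pos {A : Matrix (Fin m) (Fin m) ℝ} (hS : Ssym A ≠ 0) : 0 < Dd A := by
  have h1 := tS_pos hS; have h2 := n1_pos hS; have h3 := nsq_nonneg (brk A Aᵀ)
  rw [Dd]; positivity

lemma trace_Ssym (A : Matrix (Fin m) (Fin m) ℝ) : (Ssym A).trace = A.trace := by
  simp [Ssym, trace_add, trace_smul, trace_transpose]; ring

/-! ### directional trace identities -/

lemma l1 (A B : Matrix (Fin m) (Fin m) ℝ) :
    (Ssym A * Ssym B + Ssym B * Ssym A).trace = 2 * (Ssym A * B).trace := by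
  rw [trace_add, trace_mul_comm (Ssym B) (Ssym A)]
  have h : (Ssym A * Ssym B).trace = (Ssym A * B).trace := by
    have e : Ssym B = (1/2 : ℝ) • (B + Bᵀ) := rfl
    rw [e, Matrix.mul_smul, trace_smul, Matrix.mul_add, trace_add, tr_mul_trans,
      Ssym_transpose, smul_eq_mul]
    ring
  rw [h]; ring

lemma l2 (A B : Matrix (Fin m) (Fin m) ℝ) :
    ((A * Aᵀ - Aᵀ * A) * (A * Bᵀ + B * Aᵀ - (Aᵀ * B + Bᵀ * A))ᵀ +
      (A * Bᵀ + B * Aᵀ - (Aᵀ * B + Bᵀ * A)) * (A * Aᵀ - Aᵀ * A)ᵀ).trace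
      = 4 * (Emat A * B).trace := by
  set C := A * Aᵀ - Aᵀ * A with hC
  set J := A * Bᵀ + B * Aᵀ - (Aᵀ * B + Bᵀ * A) with hJ
  have hCt : Cᵀ = C := by rw [hC]; simp [transpose_sub, transpose_mul]
  have h1 : (C * Jᵀ).trace = (C * J).trace := by
    rw [tr_mul_trans, hCt, trace_mul_comm]
  have h2 : (J * Cᵀ).trace = (C * J).trace := by
    rw [hCt, trace_mul_comm]
  rw [trace_add, h1, h2]
  have t1 : (C * (A * Bᵀ)).trace = ((Aᵀ * C) * B).trace := by
    rw [← Matrix.mul_assoc, tr_mul_trans, transpose_mul, hCt]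
  have t2 : (C * (B * Aᵀ)).trace = ((Aᵀ * C) * B).trace := by
    rw [trace_mul_comm, Matrix.mul_assoc, trace_mul_comm]
  have t3 : (C * (Aᵀ * B)).trace = ((C * Aᵀ) * B).trace := by
    rw [← Matrix.mul_assoc]
  have t4 : (C * (Bᵀ * A)).trace = ((C * Aᵀ) * B).trace := by
    rw [trace_mul_comm, Matrix.mul_assoc, trace_mul_comm, tr_mul_trans, transpose_mul, hCt]
  have hexp : (C * J).trace
      = (C * (A * Bᵀ)).trace + (C * (B * Aᵀ)).trace
        - ((C * (Aᵀ * B)).trace + (C * (Bᵀ * A)).trace) := by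
    rw [hJ]
    rw [Matrix.mul_sub, Matrix.mul_add, Matrix.mul_add, trace_sub, trace_add, trace_add]
  have hE : Emat A * B = (Aᵀ * C) * B - (C * Aᵀ) * B := by
    rw [Emat, Matrix.sub_mul]
    rfl
  rw [hexp, t1, t2, t3, t4, hE, trace_sub]
  ring

/-! ### CLM infrastructure -/

noncomputable def trCLM (m : ℕ) :
    letI : AddCommMonoid (Matrix (Fin m) (Fin m) ℝ) :=
      (NormedAddCommGroup.toSeminormedAddCommGroup (E := Matrix (Fin m) (Fin m) ℝ)).toAddCommGroup.toAddCommMonoid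
    letI : Module ℝ (Matrix (Fin m) (Fin m) ℝ) := NormedSpace.toModule
    letI : TopologicalSpace (Matrix (Fin m) (Fin m) ℝ) :=
      (NormedAddCommGroup.toSeminormedAddCommGroup (E := Matrix (Fin m) (Fin m) ℝ)).toPseudoMetricSpace.toUniformSpace.toTopologicalSpace
    Matrix (Fin m) (Fin m) ℝ →L[ℝ] ℝ :=
  LinearMap.toContinuousLinearMap (Matrix.traceLinearMap (Fin m) ℝ ℝ)

noncomputable def mulB (m : ℕ) :
    letI : AddCommMonoid (Matrix (Fin m) (Fin m) ℝ) :=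
      (NormedAddCommGroup.toSeminormedAddCommGroup (E := Matrix (Fin m) (Fin m) ℝ)).toAddCommGroup.toAddCommMonoid
    letI : Module ℝ (Matrix (Fin m) (Fin m) ℝ) := NormedSpace.toModule
    letI : TopologicalSpace (Matrix (Fin m) (Fin m) ℝ) :=
      (NormedAddCommGroup.toSeminormedAddCommGroup (E := Matrix (Fin m) (Fin m) ℝ)).toPseudoMetricSpace.toUniformSpace.toTopologicalSpace
    Matrix (Fin m) (Fin m) ℝ →L[ℝ] Matrix (Fin m) (Fin m) ℝ →L[ℝ] Matrix (Fin m) (Fin m) ℝ :=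
  LinearMap.toContinuousLinearMap
    ((LinearMap.toContinuousLinearMap :
        (Matrix (Fin m) (Fin m) ℝ →ₗ[ℝ] Matrix (Fin m) (Fin m) ℝ) ≃ₗ[ℝ] _).toLinearMap ∘ₗ
      (LinearMap.mul ℝ (Matrix (Fin m) (Fin m) ℝ)))

@[simp] lemma mulB_apply (X Y : Matrix (Fin m) (Fin m) ℝ) : mulB m X Y = X * Y := rfl
@[simp] lemma trCLM_apply (X : Matrix (Fin m) (Fin m) ℝ) : trCLM m X = X.trace := rfl

noncomputable def transCLM (m : ℕ) :
    letI : AddCommMonoid (Matrix (Fin m) (Fin m) ℝ) :=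
      (NormedAddCommGroup.toSeminormedAddCommGroup (E := Matrix (Fin m) (Fin m) ℝ)).toAddCommGroup.toAddCommMonoid
    letI : Module ℝ (Matrix (Fin m) (Fin m) ℝ) := NormedSpace.toModule
    letI : TopologicalSpace (Matrix (Fin m) (Fin m) ℝ) :=
      (NormedAddCommGroup.toSeminormedAddCommGroup (E := Matrix (Fin m) (Fin m) ℝ)).toPseudoMetricSpace.toUniformSpace.toTopologicalSpace
    Matrix (Fin m) (Fin m) ℝ →L[ℝ] Matrix (Fin m) (Fin m) ℝ :=
  LinearMap.toContinuousLinearMap (Matrix.transposeLinearEquiv (Fin m) (Fin m) ℝ ℝ).toLinearMap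

@[simp] lemma transCLM_apply (X : Matrix (Fin m) (Fin m) ℝ) : transCLM m X = Xᵀ := rfl

noncomputable def SsymCLM (m : ℕ) :
    letI : AddCommMonoid (Matrix (Fin m) (Fin m) ℝ) :=
      (NormedAddCommGroup.toSeminormedAddCommGroup (E := Matrix (Fin m) (Fin m) ℝ)).toAddCommGroup.toAddCommMonoid
    letI : Module ℝ (Matrix (Fin m) (Fin m) ℝ) := NormedSpace.toModule
    letI : TopologicalSpace (Matrix (Fin m) (Fin m) ℝ) :=
      (NormedAddCommGroup.toSeminormedAddCommGroup (E := Matrix (Fin m) (Fin m) ℝ)).toPseudoMetricSpace.toUniformSpace.toTopologicalSpace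
    Matrix (Fin m) (Fin m) ℝ →L[ℝ] Matrix (Fin m) (Fin m) ℝ :=
  (1/2 : ℝ) • (ContinuousLinearMap.id ℝ _ + transCLM m)

@[simp] lemma SsymCLM_apply (X : Matrix (Fin m) (Fin m) ℝ) : SsymCLM m X = Ssym X := rfl

@[simp] lemma mulB_precompR_apply (X : Matrix (Fin m) (Fin m) ℝ)
    (g : letI : AddCommMonoid (Matrix (Fin m) (Fin m) ℝ) :=
      (NormedAddCommGroup.toSeminormedAddCommGroup (E := Matrix (Fin m) (Fin m) ℝ)).toAddCommGroup.toAddCommMonoid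
    letI : Module ℝ (Matrix (Fin m) (Fin m) ℝ) := NormedSpace.toModule
    letI : TopologicalSpace (Matrix (Fin m) (Fin m) ℝ) :=
      (NormedAddCommGroup.toSeminormedAddCommGroup (E := Matrix (Fin m) (Fin m) ℝ)).toPseudoMetricSpace.toUniformSpace.toTopologicalSpace
    Matrix (Fin m) (Fin m) ℝ →L[ℝ] Matrix (Fin m) (Fin m) ℝ) (y : Matrix (Fin m) (Fin m) ℝ) :
    ((mulB m).precompR (Matrix (Fin m) (Fin m) ℝ) X g) y = X * (g y) := rfl

/-! ### derivative formula -/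

set_option maxHeartbeats 1000000 in
lemma fderiv_apply (A : Matrix (Fin m) (Fin m) ℝ) (hS : Ssym A ≠ 0)
    (B : Matrix (Fin m) (Fin m) ℝ) :
    (fderiv ℝ Fpinch A) B = (Dd A)⁻¹ ^ 2 * ((n1 A • Hmat A) * B).trace := by
  have hD : (Ssym A * Ssym A).trace * ((Ssym A * Ssym A).trace + A.trace ^ 2)
      + (1 / 4) * nsq (brk A Aᵀ) ≠ 0 := ne_of_gt (Dd_pos hS)
  have hSd : @HasFDerivAt ℝ _ (Matrix (Fin m) (Fin m) ℝ) NormedAddCommGroup.toAddCommGroup NormedSpace.toModule _ (Matrix (Fin m) (Fin m) ℝ) NormedAddCommGroup.toAddCommGroup NormedSpace.toModule _ (fun A : Matrix (Fin m) (Fin m) ℝ => Ssym A) (SsymCLM m) A := by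
    have := (SsymCLM m).hasFDerivAt (x := A)
    exact this
  have hτd : @HasFDerivAt ℝ _ (Matrix (Fin m) (Fin m) ℝ) NormedAddCommGroup.toAddCommGroup NormedSpace.toModule _ ℝ NormedAddCommGroup.toAddCommGroup NormedSpace.toModule _ (fun A : Matrix (Fin m) (Fin m) ℝ => A.trace) (trCLM m) A :=
    (trCLM m).hasFDerivAt
  have hTd : @HasFDerivAt ℝ _ (Matrix (Fin m) (Fin m) ℝ) NormedAddCommGroup.toAddCommGroup NormedSpace.toModule _ (Matrix (Fin m) (Fin m) ℝ) NormedAddCommGroup.toAddCommGroup NormedSpace.toModule _ (fun A : Matrix (Fin m) (Fin m) ℝ => Aᵀ) (transCLM m) A :=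
    (transCLM m).hasFDerivAt
  have hidd : @HasFDerivAt ℝ _ (Matrix (Fin m) (Fin m) ℝ) NormedAddCommGroup.toAddCommGroup NormedSpace.toModule _ (Matrix (Fin m) (Fin m) ℝ) NormedAddCommGroup.toAddCommGroup NormedSpace.toModule _ (fun A : Matrix (Fin m) (Fin m) ℝ => A)
      (ContinuousLinearMap.id ℝ _) A := hasFDerivAt_id A
  have htd : @HasFDerivAt ℝ _ (Matrix (Fin m) (Fin m) ℝ) NormedAddCommGroup.toAddCommGroup NormedSpace.toModule _ ℝ NormedAddCommGroup.toAddCommGroup NormedSpace.toModule _ (fun A : Matrix (Fin m) (Fin m) ℝ => (Ssym A * Ssym A).trace)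
      ((trCLM m).comp ((mulB m).precompR _ (Ssym A) (SsymCLM m)
        + (mulB m).precompL _ (SsymCLM m) (Ssym A))) A := by
    have h2 := (mulB m).hasFDerivAt_of_bilinear hSd hSd
    exact (trCLM m).hasFDerivAt.comp A h2
  have hCd : @HasFDerivAt ℝ _ (Matrix (Fin m) (Fin m) ℝ) NormedAddCommGroup.toAddCommGroup NormedSpace.toModule _ (Matrix (Fin m) (Fin m) ℝ) NormedAddCommGroup.toAddCommGroup NormedSpace.toModule _ (fun A : Matrix (Fin m) (Fin m) ℝ => A * Aᵀ - Aᵀ * A)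
      (((mulB m).precompR _ A (transCLM m) + (mulB m).precompL _ (ContinuousLinearMap.id ℝ _) Aᵀ)
        - ((mulB m).precompR _ Aᵀ (ContinuousLinearMap.id ℝ _)
            + (mulB m).precompL _ (transCLM m) A)) A := by
    have h1 := (mulB m).hasFDerivAt_of_bilinear hidd hTd
    have h2 := (mulB m).hasFDerivAt_of_bilinear hTd hidd
    exact h1.sub h2
  have hqd := (trCLM m).hasFDerivAt.comp A
    ((mulB m).hasFDerivAt_of_bilinear hCd ((transCLM m).hasFDerivAt.comp A hCd))
  have hqd' : HasFDerivAt (fun y : Matrix (Fin m) (Fin m) ℝ => nsq (brk y yᵀ)) _ A := hqd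
  have hτ2d := (hasDerivAt_pow 2 A.trace).comp_hasFDerivAt A hτd
  have hn1d := htd.add hτ2d
  have hNd := (hasDerivAt_pow 2 ((Ssym A * Ssym A).trace + A.trace ^ 2)).comp_hasFDerivAt A hn1d
  have hDdd := (htd.mul hn1d).add (hqd'.const_mul (1/4 : ℝ))
  have hinv := (hasDerivAt_inv hD).comp_hasFDerivAt A hDdd
  have hFp : @HasFDerivAt ℝ _ (Matrix (Fin m) (Fin m) ℝ) NormedAddCommGroup.toAddCommGroup
      NormedSpace.toModule (NormedAddCommGroup.toSeminormedAddCommGroup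
        (E := Matrix (Fin m) (Fin m) ℝ)).toPseudoMetricSpace.toUniformSpace.toTopologicalSpace
      ℝ NormedAddCommGroup.toAddCommGroup NormedSpace.toModule _ Fpinch _ A := hNd.mul hinv
  refine (DFunLike.congr_fun hFp.fderiv B).trans ?_
  simp only [ContinuousLinearMap.sub_apply, ContinuousLinearMap.add_apply,
    ContinuousLinearMap.smul_apply, ContinuousLinearMap.comp_apply,
    ContinuousLinearMap.precompL_apply, mulB_apply, trCLM_apply, transCLM_apply,
    SsymCLM_apply, ContinuousLinearMap.id_apply, smul_eq_mul, mulB_precompR_apply,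
    Function.comp_apply, Pi.add_apply]
  rw [l1, l2]
  have hmg : ((n1 A • Hmat A) * B).trace
      = n1 A * ((nsq (brk A Aᵀ) - 2 * A.trace ^ 2 * n1 A) * (Ssym A * B).trace
        + (A.trace * (2 * tS A * n1 A + nsq (brk A Aᵀ))) * B.trace
        - n1 A * (Emat A * B).trace) := by
    simp only [Hmat, Matrix.smul_mul, trace_smul, Matrix.add_mul, Matrix.sub_mul,
      trace_add, trace_sub, Matrix.one_mul, smul_eq_mul]
  rw [hmg]
  simp only [Dd, n1, tS]
  push_cast
  simp only [pow_one]
  set x := (Ssym A * B).trace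
  set y := B.trace
  set z := (Emat A * B).trace
  set t := (Ssym A * Ssym A).trace
  set τ := A.trace
  set q := nsq (brk A Aᵀ)
  set d := t * (t + τ ^ 2) + 1 / 4 * q with hd
  have hD' : d ≠ 0 := hD
  field_simp
  ring

/-! ### gradient vanishes iff Hmat = 0 -/

lemma fderiv_zero_iff (A : Matrix (Fin m) (Fin m) ℝ) (hS : Ssym A ≠ 0) :
    fderiv ℝ Fpinch A = 0 ↔ Hmat A = 0 := by
  have hD := Dd_pos hS
  have hn := n1_pos hS
  constructor
  · intro h
    have h1 : nsq (n1 A • Hmat A) = 0 := by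
      have hfa := fderiv_apply A hS (n1 A • Hmat A)ᵀ
      rw [h] at hfa
      simp only [ContinuousLinearMap.zero_apply] at hfa
      have hD2 : (Dd A)⁻¹ ^ 2 ≠ 0 := by positivity
      have h0 := (mul_eq_zero.mp hfa.symm).resolve_left hD2
      simpa [nsq] using h0
    have h2 : n1 A • Hmat A = 0 := nsq_eq_zero.mp h1
    have := smul_eq_zero.mp h2
    rcases this with h | h
    · exact absurd h (ne_of_gt hn)
    · exact h
  · intro h
    ext B
    rw [fderiv_apply A hS B, h]
    simp

/-! ### the algebraic characterization -/

lemma hmat_zero_iff (A : Matrix (Fin m) (Fin m) ℝ) (hS : Ssym A ≠ 0) :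
    Hmat A = 0 ↔
      ((∃ c : ℝ, c ≠ 0 ∧ Ssym A = c • (1 : Matrix (Fin m) (Fin m) ℝ)) ∨
        (A * Aᵀ = Aᵀ * A ∧ A.trace = 0)) := by
  have ht := tS_pos hS
  have hn := n1_pos hS
  have hq0 := nsq_nonneg (brk A Aᵀ)
  constructor
  · intro hH
    set S := Ssym A with hSdef
    set C := brk A Aᵀ with hCdef
    set τ := A.trace with hτdef
    set t := tS A with htdef
    set q := nsq C with hqdef
    set n := n1 A with hndef
    set α := q - 2 * τ ^ 2 * n with hαdef
    set β := τ * (2 * t * n + q) with hβdef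
    have heq : α • S + β • (1 : Matrix (Fin m) (Fin m) ℝ) = n • Emat A := by
      have := sub_eq_zero.mp hH
      exact this
    have hSsym : Sᵀ = S := Ssym_transpose A
    have hCsym : Cᵀ = C := brk_transpose A
    have hEt : (Emat A)ᵀ = C * A - A * C := by
      simp [Emat, transpose_sub, transpose_mul, hCsym, ← hCdef]
    have hEsymm : Emat A = (Emat A)ᵀ := by
      have h1 : (n • Emat A)ᵀ = n • Emat A := by
        rw [← heq]; simp [transpose_add, transpose_smul, transpose_one, hSsym]
      have h2 : n • (Emat A)ᵀ = n • Emat A := by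
        rw [← transpose_smul]; exact h1
      have := smul_right_injective (Matrix (Fin m) (Fin m) ℝ) (ne_of_gt hn) h2
      exact this.symm
    have hsum : (A + Aᵀ) * C = C * (A + Aᵀ) := by
      have hEE : Aᵀ * C - C * Aᵀ = C * A - A * C := by
        have := hEsymm; rw [hEt] at this; exact this
      have h3 := sub_eq_sub_iff_add_eq_add.mp hEE
      rw [add_mul, mul_add, add_comm (A * C)]
      rw [h3]
    have hSC : S * C = C * S := by
      rw [hSdef, Ssym]
      simp only [Matrix.smul_mul, Matrix.mul_smul]
      rw [hsum]
    have htrE : (Emat A).trace = 0 := by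
      simp [Emat, trace_sub, trace_mul_comm (Aᵀ) (brk A Aᵀ)]
    have htrES : (Emat A * S).trace = 0 := by
      have h1 : Emat A * S = Aᵀ * (C * S) - C * (Aᵀ * S) := by
        simp [Emat, sub_mul, Matrix.mul_assoc]
        rfl
      rw [h1, trace_sub]
      rw [trace_mul_comm C (Aᵀ * S), Matrix.mul_assoc, ← hSC, ← Matrix.mul_assoc]
      simp [Matrix.mul_assoc]
    have htrS : S.trace = τ := trace_Ssym A
    have htrSS : (S * S).trace = t := rfl
    have eq1 : α * τ + β * m = 0 := by
      have h1 := congrArg Matrix.trace heq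
      simpa [trace_add, trace_smul, trace_one, htrS, htrE] using h1
    have eq2 : α * t + β * τ = 0 := by
      have h1 := congrArg (fun X => (X * S).trace) heq
      simp only [Matrix.add_mul, Matrix.smul_mul, trace_add, trace_smul, Matrix.one_mul,
        htrSS, htrS, htrES, smul_eq_mul, mul_zero] at h1
      exact h1
    by_cases hdet : t * m - τ ^ 2 = 0
    · left
      have hm : (m : ℝ) ≠ 0 := by
        intro hm0
        apply hS
        have : m = 0 := by exact_mod_cast hm0
        subst this
        ext i
        exact i.elim0
      have hP : nsq ((m : ℝ) • S - τ • (1 : Matrix (Fin m) (Fin m) ℝ)) = 0 := by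
        have hPt : ((m : ℝ) • S - τ • (1 : Matrix (Fin m) (Fin m) ℝ))ᵀ
            = (m : ℝ) • S - τ • 1 := by
          simp [transpose_sub, transpose_smul, hSsym]
        rw [nsq, hPt]
        simp only [Matrix.sub_mul, Matrix.mul_sub, Matrix.smul_mul, Matrix.mul_smul,
          Matrix.one_mul, Matrix.mul_one, trace_sub, trace_smul, smul_eq_mul, htrSS, htrS,
          trace_smul, trace_one]
        have h6 : τ ^ 2 = t * m := by linarith
        simp only [Fintype.card_fin]
        linear_combination (-(m:ℝ)) * h6
      have hP0 := nsq_eq_zero.mp hP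
      have hSc : S = (τ / m) • (1 : Matrix (Fin m) (Fin m) ℝ) := by
        have h5 : (m : ℝ) • S = τ • 1 := sub_eq_zero.mp hP0
        have := congrArg (fun X => (m : ℝ)⁻¹ • X) h5
        simpa [smul_smul, inv_mul_cancel₀ hm, div_eq_inv_mul] using this
      refine ⟨τ / m, ?_, hSc⟩
      intro hc0
      apply hS
      rw [hSc, hc0, zero_smul]
    · right
      have hα0 : α = 0 := by
        have h5 : α * (t * m - τ ^ 2) = 0 := by linear_combination m * eq2 - τ * eq1
        exact (mul_eq_zero.mp h5).resolve_right hdet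
      have hβ0 : β = 0 := by
        have h5 : β * (t * m - τ ^ 2) = 0 := by linear_combination t * eq1 - τ * eq2
        exact (mul_eq_zero.mp h5).resolve_right hdet
      have hτ0 : τ = 0 := by
        rcases mul_eq_zero.mp hβ0 with h | h
        · exact h
        · nlinarith
      have hq00 : q = 0 := by
        rw [hαdef] at hα0; rw [hτ0] at hα0; linarith
      have hC0 : C = 0 := nsq_eq_zero.mp hq00
      have : A * Aᵀ = Aᵀ * A := by
        have := sub_eq_zero.mp hC0
        exact this
      exact ⟨this, hτ0⟩
  · intro h
    rcases h with ⟨c, hc, hSc⟩ | ⟨hAA, hτ0⟩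
    · have hAT : Aᵀ = (2 * c) • (1 : Matrix (Fin m) (Fin m) ℝ) - A := by
        have h1 : A + Aᵀ = (2 * c) • (1 : Matrix (Fin m) (Fin m) ℝ) := by
          have h0 := hSc
          rw [Ssym] at h0
          have h2 := congrArg (fun X => (2 : ℝ) • X) h0
          simpa [smul_smul] using h2
        exact eq_sub_of_add_eq' h1
      have hC0 : brk A Aᵀ = 0 := by
        rw [brk, hAT]
        simp only [Matrix.mul_sub, Matrix.sub_mul, Matrix.mul_smul, Matrix.smul_mul,
          Matrix.mul_one, Matrix.one_mul]
        abel
      have hE0 : Emat A = 0 := by rw [Emat, hC0]; simp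
      have hq00 : nsq (brk A Aᵀ) = 0 := by rw [hC0]; simp [nsq]
      have hτc : A.trace = c * m := by
        rw [← trace_Ssym, hSc]
        simp [trace_smul, trace_one, Fintype.card_fin]
      have htc : tS A = c ^ 2 * m := by
        rw [tS, hSc]
        simp only [Matrix.smul_mul, Matrix.mul_smul, Matrix.one_mul, smul_smul, trace_smul,
          trace_one, smul_eq_mul, Fintype.card_fin]
        ring
      have hsum0 : (nsq (brk A Aᵀ) - 2 * A.trace ^ 2 * n1 A) * c
          + A.trace * (2 * tS A * n1 A + nsq (brk A Aᵀ)) = 0 := by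
        rw [hq00, hτc, htc]; ring
      rw [Hmat, hE0, hSc, smul_zero, sub_zero, smul_smul, ← add_smul, hsum0, zero_smul]
    · have hC0 : brk A Aᵀ = 0 := sub_eq_zero.mpr hAA
      have hE0 : Emat A = 0 := by rw [Emat, hC0]; simp
      have hq00 : nsq (brk A Aᵀ) = 0 := by rw [hC0]; simp [nsq]
      rw [Hmat, hE0, hq00, hτ0]
      simp

end Stmt11

/-- The gradient (total derivative) of `F` vanishes at a point `A` with
`S(A) ≠ 0` iff either `S(A) = cI` with `c ≠ 0`, or `A` is normal and traceless. -/
theorem stmt_11 (m : ℕ) (A : Matrix (Fin m) (Fin m) ℝ) (hS : Ssym A ≠ 0) :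
    fderiv ℝ Fpinch A = 0 ↔
      ((∃ c : ℝ, c ≠ 0 ∧ Ssym A = c • (1 : Matrix (Fin m) (Fin m) ℝ)) ∨
        (A * Aᵀ = Aᵀ * A ∧ A.trace = 0)) := by
  rw [Stmt11.fderiv_zero_iff A hS, Stmt11.hmat_zero_iff A hS]
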